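/- Let n ≥ 1, L > 0, and let f : ℝⁿ × ℝⁿ → ℝⁿ be L-Lipschitz (with respect to the Euclidean norm on ℝ²ⁿ). Let λ₁, λ₂, λ₃ be three pairwise distinct negative real numbers satisfying L·φ(λ₁,λ₂,λ₃)·h(λ₁,λ₂,λ₃) < 1, and set k_p = −(λ₁λ₂ + λ₁λ₃ + λ₂λ₃), k_i = λ₁λ₂λ₃, k_d = λ₁ + λ₂ + λ₃. Then for any setpoint y* ∈ ℝⁿ and any differentiable functions x₁, x₂ : [0,∞) → ℝⁿ satisfying x₁'(t) = x₂(t) and x₂'(t) = f(x₁(t), x₂(t)) + k_p·(x₁(t) − y*) + k_i·∫₀ᵗ (x₁(s) − y*) ds + k_d·x₂(t) for all t ≥ 0, there exist constants C > 0 and μ > 0 such that ‖x₁(t) − y*‖ + ‖x₂(t)‖ ≤ C·e^{−μt} for all t ≥ 0; in particular x₁(t) → y* and x₂(t) → 0 exponentially fast, for every initial value (x₁(0), x₂(0)) ∈ ℝⁿ × ℝⁿ. -/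

import Mathlib

open Real MeasureTheory intervalIntegral Set Topology Filter


noncomputable def phi (l1 l2 l3 : ℝ) : ℝ :=
  Real.sqrt (((l3 - l2) ^ 2 + (l3 - l1) ^ 2 + l3 ^ 2 * (l2 - l1) ^ 2) /
    ((l3 - l1) ^ 2 * (l2 - l1) ^ 2 * (l3 - l2) ^ 2))

noncomputable def hfun (l1 l2 l3 : ℝ) : ℝ :=
  Real.sqrt (3 + l1 ^ 2 + l2 ^ 2 + 1 / l3 ^ 2)

lemma phi_swap (l1 l2 l3 : ℝ) : phi l2 l1 l3 = phi l1 l2 l3 := by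
  unfold phi; congr 1; ring

lemma hfun_swap (l1 l2 l3 : ℝ) : hfun l2 l1 l3 = hfun l1 l2 l3 := by
  unfold hfun; congr 1; ring

lemma coreT1 (l1 l2 l3 b c : ℝ) (h12 : l1 ≠ l2) (h13 : l1 ≠ l3) (h23 : l2 ≠ l3)
    (hb : b ≠ 0) (hc : c ≠ 0)
    (hc1 : (l3 - l1) ^ 2 * (l2 - l1) ^ 2 ≤ b ^ 2 * c ^ 2)
    (hc2 : b ^ 2 ≤ l1 ^ 2 + l2 ^ 2 + 2) :
    1 / (b ^ 2 * c ^ 2) + 1 / c ^ 2 ≤ (phi l1 l2 l3 * hfun l1 l2 l3) ^ 2 := by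
  have d21 : (0:ℝ) < (l2 - l1) ^ 2 := by
    have : l2 - l1 ≠ 0 := sub_ne_zero.mpr (Ne.symm h12)
    positivity
  have d31 : (0:ℝ) < (l3 - l1) ^ 2 := by
    have : l3 - l1 ≠ 0 := sub_ne_zero.mpr (Ne.symm h13)
    positivity
  have d32 : (0:ℝ) < (l3 - l2) ^ 2 := by
    have : l3 - l2 ≠ 0 := sub_ne_zero.mpr (Ne.symm h23)
    positivity
  set N := ((l3 - l2) ^ 2 + (l3 - l1) ^ 2 + l3 ^ 2 * (l2 - l1) ^ 2) with hN
  set D := ((l3 - l1) ^ 2 * (l2 - l1) ^ 2 * (l3 - l2) ^ 2) with hD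
  have hDpos : 0 < D := by positivity
  have hNnn : 0 ≤ N := by positivity
  have hPnn : 0 ≤ N / D := div_nonneg hNnn (le_of_lt hDpos)
  have hHnn : (0:ℝ) ≤ 3 + l1 ^ 2 + l2 ^ 2 + 1 / l3 ^ 2 := by positivity
  have hsq : (phi l1 l2 l3 * hfun l1 l2 l3) ^ 2
      = (N / D) * (3 + l1 ^ 2 + l2 ^ 2 + 1 / l3 ^ 2) := by
    rw [mul_pow]
    unfold phi hfun
    rw [Real.sq_sqrt hPnn, Real.sq_sqrt hHnn]
  rw [hsq]
  -- step 1 : T1 := 1/((l3-l1)^2 (l2-l1)^2) ≤ N/D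
  have hT1 : 1 / ((l3 - l1) ^ 2 * (l2 - l1) ^ 2) ≤ N / D := by
    have he : 1 / ((l3 - l1) ^ 2 * (l2 - l1) ^ 2) = (l3 - l2) ^ 2 / D := by
      rw [hD]
      rw [eq_div_iff (by positivity)]
      field_simp
    rw [he, div_le_div_iff_of_pos_right hDpos]
    nlinarith [sq_nonneg (l3 - l1), mul_nonneg (sq_nonneg l3) (sq_nonneg (l2 - l1))]
  -- step 2 : 1/(b²c²) ≤ T1
  have hbc : (0:ℝ) < b ^ 2 * c ^ 2 := by positivity
  have hT2 : 1 / (b ^ 2 * c ^ 2) ≤ 1 / ((l3 - l1) ^ 2 * (l2 - l1) ^ 2) :=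
    one_div_le_one_div_of_le (by positivity) hc1
  -- step 3 : 1 + b² ≤ H
  have hH2 : 1 + b ^ 2 ≤ 3 + l1 ^ 2 + l2 ^ 2 + 1 / l3 ^ 2 := by
    have : (0:ℝ) ≤ 1 / l3 ^ 2 := by positivity
    linarith
  calc 1 / (b ^ 2 * c ^ 2) + 1 / c ^ 2
      = (1 / (b ^ 2 * c ^ 2)) * (1 + b ^ 2) := by
        field_simp
    _ ≤ (N / D) * (3 + l1 ^ 2 + l2 ^ 2 + 1 / l3 ^ 2) := by
        apply mul_le_mul (le_trans hT2 hT1) hH2 (by positivity) hPnn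

lemma dsq1 {u v : ℝ} (hu : u ≤ 0) (hv : v ≤ u) : (u - v) ^ 2 ≤ v ^ 2 := by nlinarith

lemma dsq2 {u v : ℝ} (hu : u ≤ 0) (hv : v ≤ u) : (v - u) ^ 2 ≤ v ^ 2 := by nlinarith

lemma sq_le_sq_of_le {u v : ℝ} (hu : u ≤ 0) (hv : v ≤ u) : u ^ 2 ≤ v ^ 2 := by nlinarith

lemma prod_bound {a b A B : ℝ} (h1 : a ^ 2 ≤ A ^ 2) (h2 : b ^ 2 ≤ B ^ 2) :
    a ^ 2 * b ^ 2 ≤ A ^ 2 * B ^ 2 :=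
  mul_le_mul h1 h2 (sq_nonneg b) (le_trans (sq_nonneg a) h1)

/-- Sorting the eigenvalues and the key gain inequality. -/
lemma key_alg (l1 l2 l3 : ℝ) (h1 : l1 < 0) (h2 : l2 < 0) (h3 : l3 < 0)
    (h12 : l1 ≠ l2) (h13 : l1 ≠ l3) (h23 : l2 ≠ l3) :
    ∃ la lb lc : ℝ, la < 0 ∧ lb ≤ la ∧ lc ≤ lb ∧
      la + lb + lc = l1 + l2 + l3 ∧
      la * lb + la * lc + lb * lc = l1 * l2 + l1 * l3 + l2 * l3 ∧
      la * lb * lc = l1 * l2 * l3 ∧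
      1 / (lb ^ 2 * lc ^ 2) + 1 / lc ^ 2 ≤ (phi l1 l2 l3 * hfun l1 l2 l3) ^ 2 := by
  have hswap : (phi l2 l1 l3 * hfun l2 l1 l3) ^ 2 = (phi l1 l2 l3 * hfun l1 l2 l3) ^ 2 := by
    rw [phi_swap, hfun_swap]
  rcases le_total l1 l2 with hA | hA
  · rcases le_total l1 l3 with hB | hB
    · rcases le_total l2 l3 with hC | hC
      · -- l1 ≤ l2 ≤ l3 : (la,lb,lc) = (l3,l2,l1)
        refine ⟨l3, l2, l1, h3, hC, hA, by ring, by ring, by ring, ?_⟩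
        rw [← hswap]
        apply coreT1 l2 l1 l3 l2 l1 (Ne.symm h12) h23 h13
          (ne_of_lt h2) (ne_of_lt h1)
        · exact prod_bound (dsq1 (le_of_lt h3) hC) (dsq2 (le_of_lt h2) hA)
        · nlinarith
      · -- l1 ≤ l3 ≤ l2 : (la,lb,lc) = (l2,l3,l1)
        refine ⟨l2, l3, l1, h2, hC, hB, by ring, by ring, by ring, ?_⟩
        rw [← hswap]
        apply coreT1 l2 l1 l3 l3 l1 (Ne.symm h12) h23 h13
          (ne_of_lt h3) (ne_of_lt h1)
        · exact prod_bound (dsq2 (le_of_lt h2) hC) (dsq2 (le_of_lt h2) hA)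
        · nlinarith [sq_le_sq_of_le (le_of_lt h3) hB]
    · -- l3 ≤ l1 ≤ l2 : (la,lb,lc) = (l2,l1,l3)
      refine ⟨l2, l1, l3, h2, hA, hB, by ring, by ring, by ring, ?_⟩
      rw [← hswap]
      apply coreT1 l2 l1 l3 l1 l3 (Ne.symm h12) h23 h13
        (ne_of_lt h1) (ne_of_lt h3)
      · rw [mul_comm (l1 ^ 2) (l3 ^ 2)]
        exact prod_bound (dsq2 (le_of_lt h2) (le_trans hB hA)) (dsq2 (le_of_lt h2) hA)
      · nlinarith
  · rcases le_total l2 l3 with hB | hB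
    · rcases le_total l1 l3 with hC | hC
      · -- l2 ≤ l1 ≤ l3 : (la,lb,lc) = (l3,l1,l2)
        refine ⟨l3, l1, l2, h3, hC, hA, by ring, by ring, by ring, ?_⟩
        apply coreT1 l1 l2 l3 l1 l2 h12 h13 h23 (ne_of_lt h1) (ne_of_lt h2)
        · exact prod_bound (dsq1 (le_of_lt h3) hC) (dsq2 (le_of_lt h1) hA)
        · nlinarith
      · -- l2 ≤ l3 ≤ l1 : (la,lb,lc) = (l1,l3,l2)
        refine ⟨l1, l3, l2, h1, hC, hB, by ring, by ring, by ring, ?_⟩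
        apply coreT1 l1 l2 l3 l3 l2 h12 h13 h23 (ne_of_lt h3) (ne_of_lt h2)
        · exact prod_bound (dsq2 (le_of_lt h1) hC) (dsq2 (le_of_lt h1) hA)
        · nlinarith [sq_le_sq_of_le (le_of_lt h3) hB]
    · -- l3 ≤ l2 ≤ l1 : (la,lb,lc) = (l1,l2,l3)
      refine ⟨l1, l2, l3, h1, hA, hB, by ring, by ring, by ring, ?_⟩
      apply coreT1 l1 l2 l3 l2 l3 h12 h13 h23 (ne_of_lt h2) (ne_of_lt h3)
      · rw [mul_comm (l2 ^ 2) (l3 ^ 2)]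
        exact prod_bound (dsq2 (le_of_lt h1) (le_trans hB hA)) (dsq2 (le_of_lt h1) hA)
      · nlinarith



variable {F : Type*} [NormedAddCommGroup F] [InnerProductSpace ℝ F]

local notation "⟪" x ", " y "⟫" => @inner ℝ _ _ x y

lemma energy_identity {u u' : ℝ → F} {T : ℝ} (hT : 0 ≤ T)
    (hu : ∀ t ∈ Icc (0:ℝ) T, HasDerivAt u (u' t) t)
    (hu' : ContinuousOn u' (Icc 0 T)) :
    ‖u T‖ ^ 2 - ‖u 0‖ ^ 2 = ∫ t in (0:ℝ)..T, 2 * ⟪u t, u' t⟫ := by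
  have huc : ContinuousOn u (Icc 0 T) := fun t ht => (hu t ht).continuousAt.continuousWithinAt
  have hicc : uIcc (0:ℝ) T = Icc 0 T := uIcc_of_le hT
  have hD : ∀ t ∈ uIcc (0:ℝ) T,
      HasDerivAt (fun t => ‖u t‖ ^ 2) (2 * ⟪u t, u' t⟫) t := by
    intro t ht
    rw [hicc] at ht
    have h1 := (hu t ht).inner ℝ (hu t ht)
    have h2 : (fun t => ⟪u t, u t⟫) = fun t => ‖u t‖ ^ 2 := by
      funext s; rw [real_inner_self_eq_norm_sq]
    rw [h2] at h1
    have h3 : ⟪u t, u' t⟫ + ⟪u' t, u t⟫ = 2 * ⟪u t, u' t⟫ := by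
      rw [real_inner_comm (u t) (u' t)]
      ring
    rw [h3] at h1
    exact h1
  have hint : IntervalIntegrable (fun t => 2 * ⟪u t, u' t⟫) volume 0 T := by
    apply ContinuousOn.intervalIntegrable
    rw [hicc]
    exact (continuousOn_const.mul ((huc.inner hu'))).congr (fun x hx => rfl)
  have := intervalIntegral.integral_eq_sub_of_hasDerivAt hD hint
  rw [this]

/-- L² bounds for a stable first-order filter `u' = σ • u + q`, `σ < 0`:
    (A1) `∫‖u‖² ≤ ∫‖q‖²/σ² + ‖u 0‖²/(-σ)` and
    (A2) `∫‖u'‖² ≤ (-σ)‖u 0‖² + ∫‖q‖²`. -/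
lemma filter_bounds {σ : ℝ} (hσ : σ < 0) {u q : ℝ → F}
    (hu : ∀ t, 0 ≤ t → HasDerivAt u (σ • u t + q t) t)
    (hq : ContinuousOn q (Ici 0)) {T : ℝ} (hT : 0 ≤ T) :
    (∫ t in (0:ℝ)..T, ‖u t‖ ^ 2) ≤ (∫ t in (0:ℝ)..T, ‖q t‖ ^ 2) / σ ^ 2 + ‖u 0‖ ^ 2 / (-σ)
    ∧ (∫ t in (0:ℝ)..T, ‖σ • u t + q t‖ ^ 2) ≤ (-σ) * ‖u 0‖ ^ 2 + ∫ t in (0:ℝ)..T, ‖q t‖ ^ 2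
    ∧ ‖u T‖ ^ 2 ≤ ‖u 0‖ ^ 2 + (∫ t in (0:ℝ)..T, ‖u t‖ ^ 2)
        + ∫ t in (0:ℝ)..T, ‖σ • u t + q t‖ ^ 2 := by
  have hicc : uIcc (0:ℝ) T = Icc 0 T := uIcc_of_le hT
  have hsub : Icc (0:ℝ) T ⊆ Ici 0 := fun x hx => hx.1
  have huc : ContinuousOn u (Icc 0 T) := fun t ht =>
    (hu t ht.1).continuousAt.continuousWithinAt
  have hqc : ContinuousOn q (Icc 0 T) := hq.mono hsub
  have hu'c : ContinuousOn (fun t => σ • u t + q t) (Icc 0 T) :=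
    (continuousOn_const.smul huc).add hqc
  -- integrability of the various integrands
  have iInt : ∀ {φ : ℝ → ℝ}, ContinuousOn φ (Icc 0 T) → IntervalIntegrable φ volume 0 T := by
    intro φ hφ; apply ContinuousOn.intervalIntegrable; rwa [hicc]
  have hIu : IntervalIntegrable (fun t => ‖u t‖ ^ 2) volume 0 T := iInt ((huc.norm).pow 2)
  have hIq : IntervalIntegrable (fun t => ‖q t‖ ^ 2) volume 0 T := iInt ((hqc.norm).pow 2)
  have hIinner : IntervalIntegrable (fun t => ⟪u t, q t⟫) volume 0 T := iInt (huc.inner hqc)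
  have hIu' : IntervalIntegrable (fun t => ‖σ • u t + q t‖ ^ 2) volume 0 T :=
    iInt ((hu'c.norm).pow 2)
  -- the energy identity
  have hE : ‖u T‖ ^ 2 - ‖u 0‖ ^ 2
      = 2 * σ * (∫ t in (0:ℝ)..T, ‖u t‖ ^ 2) + 2 * ∫ t in (0:ℝ)..T, ⟪u t, q t⟫ := by
    have := energy_identity hT (fun t ht => hu t ht.1) hu'c
    rw [this]
    have : ∀ t : ℝ, 2 * ⟪u t, σ • u t + q t⟫
        = (2 * σ) * ‖u t‖ ^ 2 + 2 * ⟪u t, q t⟫ := by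
      intro t
      rw [inner_add_right, real_inner_smul_right, real_inner_self_eq_norm_sq]
      ring
    rw [intervalIntegral.integral_congr (fun t _ => this t)]
    rw [intervalIntegral.integral_add (hIu.const_mul _) (hIinner.const_mul 2)]
    rw [intervalIntegral.integral_const_mul, intervalIntegral.integral_const_mul]
  set A := (∫ t in (0:ℝ)..T, ‖u t‖ ^ 2) with hA
  set B := (∫ t in (0:ℝ)..T, ‖q t‖ ^ 2) with hB
  set S := (∫ t in (0:ℝ)..T, ⟪u t, q t⟫) with hS
  have hA0 : 0 ≤ A := intervalIntegral.integral_nonneg hT (fun t _ => sq_nonneg _)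
  have hB0 : 0 ≤ B := intervalIntegral.integral_nonneg hT (fun t _ => sq_nonneg _)
  have hXT : (0:ℝ) ≤ ‖u T‖ ^ 2 := sq_nonneg _
  have hσ' : 0 < -σ := by linarith
  have hσ2 : 0 < σ ^ 2 := by nlinarith
  -- polynomial bound on S : 2(-σ) S ≤ σ² A + B
  have hSbound : 2 * (-σ) * S ≤ σ ^ 2 * A + B := by
    have hmono : ∀ t ∈ Icc (0:ℝ) T,
        2 * (-σ) * ⟪u t, q t⟫ ≤ σ ^ 2 * ‖u t‖ ^ 2 + ‖q t‖ ^ 2 := by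
      intro t ht
      have h1 : ⟪u t, q t⟫ ≤ ‖u t‖ * ‖q t‖ := real_inner_le_norm _ _
      nlinarith [sq_nonneg ((-σ) * ‖u t‖ - ‖q t‖), mul_le_mul_of_nonneg_left h1 (le_of_lt (by linarith : (0:ℝ) < 2 * (-σ)))]
    calc 2 * (-σ) * S = ∫ t in (0:ℝ)..T, 2 * (-σ) * ⟪u t, q t⟫ := by
          rw [hS, intervalIntegral.integral_const_mul]
      _ ≤ ∫ t in (0:ℝ)..T, (σ ^ 2 * ‖u t‖ ^ 2 + ‖q t‖ ^ 2) := by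
          apply intervalIntegral.integral_mono_on hT (hIinner.const_mul _)
            ((hIu.const_mul _).add hIq) hmono
      _ = σ ^ 2 * A + B := by
          rw [intervalIntegral.integral_add (hIu.const_mul _) hIq,
            intervalIntegral.integral_const_mul]
  refine ⟨?_, ?_, ?_⟩
  · -- A1
    rw [div_add_div _ _ (ne_of_gt hσ2) (ne_of_gt hσ'), le_div_iff₀ (mul_pos hσ2 hσ')]
    -- key : σ² A ≤ (-σ) ‖u 0‖² + B
    have hkey : σ ^ 2 * A ≤ (-σ) * ‖u 0‖ ^ 2 + B := by nlinarith [hE, hXT, mul_nonneg (le_of_lt hσ') hXT]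
    nlinarith [mul_le_mul_of_nonneg_left hkey (le_of_lt hσ')]
  · -- A2 : expand ‖σ•u+q‖² = σ²‖u‖² + 2σ⟪u,q⟫ + ‖q‖²
    have hexp : ∀ t : ℝ, ‖σ • u t + q t‖ ^ 2
        = σ ^ 2 * ‖u t‖ ^ 2 + (2 * σ) * ⟪u t, q t⟫ + ‖q t‖ ^ 2 := by
      intro t
      rw [@norm_add_sq_real F, norm_smul, real_inner_smul_left]
      simp only [Real.norm_eq_abs]
      rw [mul_pow, sq_abs]
      ring
    have hC : (∫ t in (0:ℝ)..T, ‖σ • u t + q t‖ ^ 2)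
        = σ ^ 2 * A + (2 * σ) * S + B := by
      rw [intervalIntegral.integral_congr (fun t _ => hexp t)]
      rw [intervalIntegral.integral_add (((hIu.const_mul _)).add (hIinner.const_mul _)) hIq,
        intervalIntegral.integral_add (hIu.const_mul _) (hIinner.const_mul _),
        intervalIntegral.integral_const_mul, intervalIntegral.integral_const_mul]
    rw [hC]
    have hσT : σ * ‖u T‖ ^ 2 ≤ 0 := mul_nonpos_of_nonpos_of_nonneg (le_of_lt hσ) hXT
    nlinarith [hE, mul_nonneg (le_of_lt hσ2) hA0]
  · -- A3 : pointwise bound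
    have hE2 : ‖u T‖ ^ 2 - ‖u 0‖ ^ 2 = ∫ t in (0:ℝ)..T, 2 * ⟪u t, σ • u t + q t⟫ :=
      energy_identity hT (fun t ht => hu t ht.1) hu'c
    have hmono : ∀ t ∈ Icc (0:ℝ) T,
        2 * ⟪u t, σ • u t + q t⟫ ≤ ‖u t‖ ^ 2 + ‖σ • u t + q t‖ ^ 2 := by
      intro t ht
      have h1 : ⟪u t, σ • u t + q t⟫ ≤ ‖u t‖ * ‖σ • u t + q t‖ := real_inner_le_norm _ _
      nlinarith [sq_nonneg (‖u t‖ - ‖σ • u t + q t‖)]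
    have hIinner2 : IntervalIntegrable (fun t => 2 * ⟪u t, σ • u t + q t⟫) volume 0 T :=
      iInt ((continuousOn_const.mul (huc.inner hu'c)))
    have : (∫ t in (0:ℝ)..T, 2 * ⟪u t, σ • u t + q t⟫)
        ≤ ∫ t in (0:ℝ)..T, (‖u t‖ ^ 2 + ‖σ • u t + q t‖ ^ 2) :=
      intervalIntegral.integral_mono_on hT hIinner2 (hIu.add hIu') hmono
    rw [intervalIntegral.integral_add hIu hIu'] at this
    nlinarith [hE2]


section MoreHelpers

variable {F : Type*} [NormedAddCommGroup F] [InnerProductSpace ℝ F]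

omit [InnerProductSpace ℝ F] in
lemma norm_sub_sq_le' (X Y : F) {s : ℝ} (hs : 0 < s) :
    ‖X - Y‖ ^ 2 ≤ (1 + s) * ‖X‖ ^ 2 + (1 + 1 / s) * ‖Y‖ ^ 2 := by
  have h := norm_sub_le X Y
  have h2 : ‖X - Y‖ ^ 2 ≤ (‖X‖ + ‖Y‖) ^ 2 := by
    nlinarith [norm_nonneg (X - Y), norm_nonneg X, norm_nonneg Y]
  have key : 2 * (‖X‖ * ‖Y‖) ≤ s * ‖X‖ ^ 2 + (1 / s) * ‖Y‖ ^ 2 := by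
    rw [← mul_le_mul_iff_left₀ hs]
    have hss : s ≠ 0 := ne_of_gt hs
    field_simp
    nlinarith [sq_nonneg (s * ‖X‖ - ‖Y‖)]
  nlinarith [h2]

lemma exp_smul_deriv (μ : ℝ) {u : ℝ → F} {d : F} {t : ℝ} (hu : HasDerivAt u d t) :
    HasDerivAt (fun s => Real.exp (μ * s) • u s)
      (Real.exp (μ * t) • d + (Real.exp (μ * t) * μ) • u t) t := by
  have h1 : HasDerivAt (fun s : ℝ => μ * s) μ t := by
    simpa using (hasDerivAt_id t).const_mul μ
  have hexp : HasDerivAt (fun s : ℝ => Real.exp (μ * s)) (Real.exp (μ * t) * μ) t :=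
    (Real.hasDerivAt_exp (μ * t)).comp t h1
  exact hexp.smul hu

end MoreHelpers
set_option maxHeartbeats 2000000 in
theorem pid_second_order_global_stabilization
    (n : ℕ) (hn : 1 ≤ n) (L : ℝ) (hL : 0 < L)
    (f : EuclideanSpace ℝ (Fin n) × EuclideanSpace ℝ (Fin n) → EuclideanSpace ℝ (Fin n))
    (hf : ∀ x y : EuclideanSpace ℝ (Fin n) × EuclideanSpace ℝ (Fin n),
      ‖f x - f y‖ ≤ L * Real.sqrt (‖x.1 - y.1‖ ^ 2 + ‖x.2 - y.2‖ ^ 2))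
    (l1 l2 l3 : ℝ) (h1 : l1 < 0) (h2 : l2 < 0) (h3 : l3 < 0)
    (h12 : l1 ≠ l2) (h13 : l1 ≠ l3) (h23 : l2 ≠ l3)
    (hcond : L * phi l1 l2 l3 * hfun l1 l2 l3 < 1)
    (kp ki kd : ℝ)
    (hkp : kp = -(l1 * l2 + l1 * l3 + l2 * l3))
    (hki : ki = l1 * l2 * l3)
    (hkd : kd = l1 + l2 + l3)
    (ystar : EuclideanSpace ℝ (Fin n))
    (x1 x2 : ℝ → EuclideanSpace ℝ (Fin n))
    (hx1 : ∀ t, 0 ≤ t → HasDerivAt x1 (x2 t) t)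
    (hx2 : ∀ t, 0 ≤ t → HasDerivAt x2
      (f (x1 t, x2 t) + kp • (x1 t - ystar)
        + ki • (∫ s in (0:ℝ)..t, (x1 s - ystar))
        + kd • x2 t) t) :
    ∃ C > (0:ℝ), ∃ μ > (0:ℝ), ∀ t, 0 ≤ t →
      ‖x1 t - ystar‖ + ‖x2 t‖ ≤ C * Real.exp (-μ * t) := by
  obtain ⟨la, lb, lc, hla, hba, hcb, hsum, hpair, hprod, hineq⟩ :=
    key_alg l1 l2 l3 h1 h2 h3 h12 h13 h23
  have hlb : lb < 0 := lt_of_le_of_lt hba hla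
  have hlc : lc < 0 := lt_of_le_of_lt hcb hlb
  have hkd' : kd = la + lb + lc := by rw [hkd, hsum]
  have hkp' : kp = -(la * lb + la * lc + lb * lc) := by rw [hkp, ← hpair]
  have hki' : ki = la * lb * lc := by rw [hki, ← hprod]
  have hkine : ki ≠ 0 := by
    rw [hki']
    have hpos : 0 < (-la) * (-lb) * (-lc) := by
      have := neg_pos.mpr hla; have := neg_pos.mpr hlb; have := neg_pos.mpr hlc
      positivity
    nlinarith
  -- basic functions
  set e : ℝ → EuclideanSpace ℝ (Fin n) := fun t => x1 t - ystar with he_def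
  set g : ℝ → EuclideanSpace ℝ (Fin n) := fun t => f (x1 t, x2 t) - f (ystar, 0) with hg_def
  have hx1c : ContinuousOn x1 (Ici 0) := fun t ht => (hx1 t ht).continuousAt.continuousWithinAt
  have hx2c : ContinuousOn x2 (Ici 0) := fun t ht => (hx2 t ht).continuousAt.continuousWithinAt
  have hec : ContinuousOn e (Ici 0) := hx1c.sub continuousOn_const
  -- `f` is Lipschitz, hence continuous
  have hsqrt2 : ∀ a b : ℝ, 0 ≤ a → 0 ≤ b → Real.sqrt (a ^ 2 + b ^ 2) ≤ a + b := by
    intro a b ha hb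
    rw [show a + b = Real.sqrt ((a + b) ^ 2) by rw [Real.sqrt_sq (by linarith)]]
    apply Real.sqrt_le_sqrt
    nlinarith [mul_nonneg ha hb]
  have hfc : Continuous f := by
    have : LipschitzWith ⟨2 * L, by positivity⟩ f := by
      apply LipschitzWith.of_dist_le_mul
      intro x y
      have hb := hf x y
      have hd1 : ‖x.1 - y.1‖ = dist x.1 y.1 := (dist_eq_norm _ _).symm
      have hd2 : ‖x.2 - y.2‖ = dist x.2 y.2 := (dist_eq_norm _ _).symm
      have hmax : dist x.1 y.1 ≤ dist x y := le_trans (le_max_left _ _) (le_of_eq (Prod.dist_eq).symm)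
      have hmax2 : dist x.2 y.2 ≤ dist x y := le_trans (le_max_right _ _) (le_of_eq (Prod.dist_eq).symm)
      have hs := hsqrt2 ‖x.1 - y.1‖ ‖x.2 - y.2‖ (norm_nonneg _) (norm_nonneg _)
      rw [dist_eq_norm]
      calc ‖f x - f y‖ ≤ L * Real.sqrt (‖x.1 - y.1‖ ^ 2 + ‖x.2 - y.2‖ ^ 2) := hb
        _ ≤ L * (‖x.1 - y.1‖ + ‖x.2 - y.2‖) := by
            apply mul_le_mul_of_nonneg_left hs (le_of_lt hL)
        _ ≤ L * (dist x y + dist x y) := by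
            rw [hd1, hd2]
            apply mul_le_mul_of_nonneg_left (by linarith) (le_of_lt hL)
        _ = (⟨2 * L, by positivity⟩ : NNReal) * dist x y := by
            push_cast
            ring
    exact this.continuous
  have hgc : ContinuousOn g (Ici 0) :=
    (hfc.comp_continuousOn (hx1c.prodMk hx2c)).sub continuousOn_const
  -- pointwise bound on g
  have hgbd : ∀ t : ℝ, ‖g t‖ ^ 2 ≤ L ^ 2 * (‖e t‖ ^ 2 + ‖x2 t‖ ^ 2) := by
    intro t
    have hb := hf (x1 t, x2 t) (ystar, 0)
    simp only [sub_zero] at hb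
    have hnn : (0:ℝ) ≤ ‖x1 t - ystar‖ ^ 2 + ‖x2 t‖ ^ 2 := by positivity
    have hs : Real.sqrt (‖x1 t - ystar‖ ^ 2 + ‖x2 t‖ ^ 2) ^ 2
        = ‖x1 t - ystar‖ ^ 2 + ‖x2 t‖ ^ 2 := Real.sq_sqrt hnn
    have h0 : (0:ℝ) ≤ L * Real.sqrt (‖x1 t - ystar‖ ^ 2 + ‖x2 t‖ ^ 2) := by positivity
    have hsq : ‖g t‖ ^ 2 ≤ (L * Real.sqrt (‖x1 t - ystar‖ ^ 2 + ‖x2 t‖ ^ 2)) ^ 2 := by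
      have := norm_nonneg (g t)
      nlinarith
    calc ‖g t‖ ^ 2 ≤ (L * Real.sqrt (‖x1 t - ystar‖ ^ 2 + ‖x2 t‖ ^ 2)) ^ 2 := hsq
      _ = L ^ 2 * (‖e t‖ ^ 2 + ‖x2 t‖ ^ 2) := by rw [mul_pow, hs]
  -- extension of e and the integrator state w
  set ebar : ℝ → EuclideanSpace ℝ (Fin n) := fun t => x1 (max t 0) - ystar with hebar_def
  have hebarc : Continuous ebar := by
    rw [continuous_iff_continuousAt]
    intro t
    have hm : ContinuousAt (fun s : ℝ => max s 0) t :=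
      (continuous_id.max continuous_const).continuousAt
    have h2 : ContinuousAt x1 (max t 0) := (hx1 _ (le_max_right t 0)).continuousAt
    exact ContinuousAt.sub (ContinuousAt.comp (g := x1) (f := fun s : ℝ => max s 0) h2 hm) continuousAt_const
  have hebar_eq : ∀ t : ℝ, 0 ≤ t → ebar t = e t := by
    intro t ht
    simp only [hebar_def, he_def, max_eq_left ht]
  set w : ℝ → EuclideanSpace ℝ (Fin n) :=
    fun t => (∫ s in (0:ℝ)..t, ebar s) + ki⁻¹ • f (ystar, 0) with hw_def
  have hw : ∀ t : ℝ, HasDerivAt w (ebar t) t := by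
    intro t
    have hint : IntervalIntegrable ebar volume 0 t := hebarc.intervalIntegrable 0 t
    have h1 : HasDerivAt (fun u => ∫ s in (0:ℝ)..u, ebar s) (ebar t) t :=
      intervalIntegral.integral_hasDerivAt_right hint
        (hebarc.stronglyMeasurableAtFilter volume (𝓝 t)) hebarc.continuousAt
    simpa [hw_def] using h1.add_const (ki⁻¹ • f (ystar, 0))
  have hwc : Continuous w := by
    rw [continuous_iff_continuousAt]
    exact fun t => (hw t).continuousAt
  -- rewrite the x2 dynamics in terms of w
  have hx2' : ∀ t, 0 ≤ t → HasDerivAt x2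
      (g t + kp • e t + ki • w t + kd • x2 t) t := by
    intro t ht
    have h0 := hx2 t ht
    have hIeq : (∫ s in (0:ℝ)..t, (x1 s - ystar)) = ∫ s in (0:ℝ)..t, ebar s := by
      apply intervalIntegral.integral_congr
      intro s hs
      rw [uIcc_of_le ht] at hs
      simp only [hebar_def, max_eq_left hs.1]
    convert h0 using 1
    rw [hIeq, hg_def, hw_def, he_def]
    simp only
    rw [smul_add, smul_inv_smul₀ hkine]
    abel
  -- transformed variables
  set v : ℝ → EuclideanSpace ℝ (Fin n) :=
    fun t => x2 t - (lb + lc) • e t + (lb * lc) • w t with hv_def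
  set r : ℝ → EuclideanSpace ℝ (Fin n) := fun t => x2 t - lb • e t with hr_def
  have he' : ∀ t, (0:ℝ) ≤ t → HasDerivAt e (x2 t) t := fun t ht => (hx1 t ht).sub_const ystar
  have hx2eq : ∀ t : ℝ, x2 t = lb • e t + r t := by
    intro t; rw [hr_def]; module
  have hv : ∀ t, (0:ℝ) ≤ t → HasDerivAt v (la • v t + g t) t := by
    intro t ht
    have hD := ((hx2' t ht).sub ((he' t ht).const_smul (lb + lc))).add
      ((hw t).const_smul (lb * lc))
    rw [hebar_eq t ht] at hD
    refine hD.congr_deriv ?_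
    rw [hv_def, hkd', hkp', hki']
    simp only
    module
  have hr : ∀ t, (0:ℝ) ≤ t → HasDerivAt r (lc • r t + (la • v t + g t)) t := by
    intro t ht
    have hD := (hx2' t ht).sub ((he' t ht).const_smul lb)
    refine hD.congr_deriv ?_
    rw [hr_def, hv_def, hkd', hkp', hki']
    simp only
    module
  have hed : ∀ t, (0:ℝ) ≤ t → HasDerivAt e (lb • e t + r t) t := by
    intro t ht
    have := he' t ht
    rw [hx2eq t] at this
    exact this
  have hvc : ContinuousOn v (Ici 0) := by
    rw [hv_def]
    have hc1 : ContinuousOn (fun t => (lb * lc) • w t) (Ici 0) := hwc.continuousOn.const_smul (lb * lc)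
    have hc2 : ContinuousOn (fun t => (lb + lc) • e t) (Ici 0) := hec.const_smul (lb + lc)
    exact (hx2c.sub hc2).add hc1
  have hrc : ContinuousOn r (Ici 0) := hx2c.sub (hec.const_smul lb)
  -- gain function and choice of μ
  have hphin : 0 ≤ phi l1 l2 l3 := Real.sqrt_nonneg _
  have hhn : 0 ≤ hfun l1 l2 l3 := Real.sqrt_nonneg _
  have hphn : 0 ≤ L * phi l1 l2 l3 * hfun l1 l2 l3 := by positivity
  set Θf : ℝ → ℝ := fun μ => L ^ 2 * ((1 + μ) + (μ + μ ^ 2) / (la + μ) ^ 2) *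
      (((1 + μ + μ ^ 2) / (lb + μ) ^ 2 + (1 + μ)) / (lc + μ) ^ 2) with hTf_def
  have hlane : la ≠ 0 := ne_of_lt hla
  have hlbne : lb ≠ 0 := ne_of_lt hlb
  have hlcne : lc ≠ 0 := ne_of_lt hlc
  have hTf0 : Θf 0 < 1 := by
    have he0 : Θf 0 = L ^ 2 * (1 / (lb ^ 2 * lc ^ 2) + 1 / lc ^ 2) := by
      rw [hTf_def]
      simp only
      field_simp
      have hb2 : lb ^ 2 * lb⁻¹ ^ 2 = 1 := by rw [← mul_pow, mul_inv_cancel₀ hlbne, one_pow]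
      have hc2 : lc ^ 2 * lc⁻¹ ^ 2 = 1 := by rw [← mul_pow, mul_inv_cancel₀ hlcne, one_pow]
      linear_combination (lb ^ 2 * lb⁻¹ ^ 2 + lb ^ 2) * hc2 + hb2
    rw [he0]
    have hstep : L ^ 2 * (1 / (lb ^ 2 * lc ^ 2) + 1 / lc ^ 2)
        ≤ L ^ 2 * (phi l1 l2 l3 * hfun l1 l2 l3) ^ 2 :=
      mul_le_mul_of_nonneg_left hineq (by positivity)
    nlinarith
  have hTfc : ContinuousAt Θf 0 := by
    have hane : ((la + (0:ℝ)) ^ 2) ≠ 0 := by simpa using pow_ne_zero 2 hlane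
    have hbne : ((lb + (0:ℝ)) ^ 2) ≠ 0 := by simpa using pow_ne_zero 2 hlbne
    have hcne : ((lc + (0:ℝ)) ^ 2) ≠ 0 := by simpa using pow_ne_zero 2 hlcne
    rw [hTf_def]
    apply ContinuousAt.mul
    apply ContinuousAt.mul continuousAt_const
    · exact (continuousAt_const.add continuousAt_id).add
        (((continuousAt_id.add (continuousAt_id.pow 2)).div
          ((continuousAt_const.add continuousAt_id).pow 2) hane))
    · exact ((((continuousAt_const.add continuousAt_id).add (continuousAt_id.pow 2)).div
        ((continuousAt_const.add continuousAt_id).pow 2) hbne).add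
        (continuousAt_const.add continuousAt_id)).div
        ((continuousAt_const.add continuousAt_id).pow 2) hcne
  have hev1 : ∀ᶠ μ in 𝓝 (0:ℝ), Θf μ < 1 := hTfc.eventually_lt continuousAt_const hTf0
  obtain ⟨δ, hδpos, hδ⟩ := Metric.eventually_nhds_iff.mp hev1
  set μ := min (δ / 2) (-la / 2) with hμ_def
  have hμpos : 0 < μ := lt_min (by linarith) (by linarith)
  have hμla : μ ≤ -la / 2 := min_le_right _ _
  have hTμ : Θf μ < 1 := by
    apply hδ
    rw [Real.dist_eq, sub_zero, abs_of_pos hμpos]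
    calc μ ≤ δ / 2 := min_le_left _ _
      _ < δ := by linarith
  set σa := la + μ with hσa_def
  set σb := lb + μ with hσb_def
  set σc := lc + μ with hσc_def
  have hσa : σa < 0 := by rw [hσa_def]; linarith
  have hσb : σb < 0 := by rw [hσb_def]; linarith
  have hσc : σc < 0 := by rw [hσc_def]; linarith
  -- weighted signals
  set ev : ℝ → EuclideanSpace ℝ (Fin n) := fun t => Real.exp (μ * t) • v t with hev_def
  set eg : ℝ → EuclideanSpace ℝ (Fin n) := fun t => Real.exp (μ * t) • g t with heg_def
  set ep : ℝ → EuclideanSpace ℝ (Fin n) :=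
    fun t => Real.exp (μ * t) • (la • v t + g t) with hep_def
  set er : ℝ → EuclideanSpace ℝ (Fin n) := fun t => Real.exp (μ * t) • r t with her_def
  set ee : ℝ → EuclideanSpace ℝ (Fin n) := fun t => Real.exp (μ * t) • e t with hee_def
  set ex2 : ℝ → EuclideanSpace ℝ (Fin n) := fun t => Real.exp (μ * t) • x2 t with hex2_def
  have hevd : ∀ t, (0:ℝ) ≤ t → HasDerivAt ev (σa • ev t + eg t) t := by
    intro t ht
    have hD := exp_smul_deriv μ (hv t ht)
    refine hD.congr_deriv ?_
    rw [hev_def, heg_def, hσa_def]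
    simp only
    module
  have herd : ∀ t, (0:ℝ) ≤ t → HasDerivAt er (σc • er t + ep t) t := by
    intro t ht
    have hD := exp_smul_deriv μ (hr t ht)
    refine hD.congr_deriv ?_
    rw [her_def, hep_def, hσc_def]
    simp only
    module
  have heed : ∀ t, (0:ℝ) ≤ t → HasDerivAt ee (σb • ee t + er t) t := by
    intro t ht
    have hD := exp_smul_deriv μ (hed t ht)
    refine hD.congr_deriv ?_
    rw [hee_def, her_def, hσb_def]
    simp only
    module
  have hexpc : Continuous fun t : ℝ => Real.exp (μ * t) :=
    Real.continuous_exp.comp (continuous_const.mul continuous_id)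
  have hegc : ContinuousOn eg (Ici 0) := hexpc.continuousOn.smul hgc
  have hepc : ContinuousOn ep (Ici 0) :=
    hexpc.continuousOn.smul ((hvc.const_smul la).add hgc)
  have herc : ContinuousOn er (Ici 0) := hexpc.continuousOn.smul hrc
  have heec : ContinuousOn ee (Ici 0) := hexpc.continuousOn.smul hec
  have hex2c : ContinuousOn ex2 (Ici 0) := hexpc.continuousOn.smul hx2c
  have hevc : ContinuousOn ev (Ici 0) := hexpc.continuousOn.smul hvc
  -- pointwise identities
  have hep_id : ∀ t : ℝ, ep t = (σa • ev t + eg t) - μ • ev t := by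
    intro t
    rw [hep_def, hev_def, heg_def, hσa_def]
    simp only
    module
  have hex2_id : ∀ t : ℝ, ex2 t = (σb • ee t + er t) - μ • ee t := by
    intro t
    rw [hex2_def, hee_def, her_def, hσb_def]
    simp only
    rw [hx2eq t]
    module
  have hex2_id2 : ∀ t : ℝ, ex2 t = lb • ee t + er t := by
    intro t
    rw [hex2_def, hee_def, her_def]
    simp only
    rw [hx2eq t]
    module
  -- initial data constants
  have hev0 : ev 0 = v 0 := by rw [hev_def]; simp
  have her0 : er 0 = r 0 := by rw [her_def]; simp
  have hee0 : ee 0 = e 0 := by rw [hee_def]; simp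
  set V0 := ‖v 0‖ ^ 2 with hV0_def
  set R0 := ‖r 0‖ ^ 2 with hR0_def
  set E0 := ‖e 0‖ ^ 2 with hE0_def
  have hV0nn : (0:ℝ) ≤ V0 := by rw [hV0_def]; positivity
  have hR0nn : (0:ℝ) ≤ R0 := by rw [hR0_def]; positivity
  have hE0nn : (0:ℝ) ≤ E0 := by rw [hE0_def]; positivity
  have hna : (0:ℝ) < -σa := neg_pos.mpr hσa
  have hnb : (0:ℝ) < -σb := neg_pos.mpr hσb
  have hnc : (0:ℝ) < -σc := neg_pos.mpr hσc
  have hσa2 : (0:ℝ) < σa ^ 2 := by rw [sq]; exact mul_pos_of_neg_of_neg hσa hσa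
  have hσb2 : (0:ℝ) < σb ^ 2 := by rw [sq]; exact mul_pos_of_neg_of_neg hσb hσb
  have hσc2 : (0:ℝ) < σc ^ 2 := by rw [sq]; exact mul_pos_of_neg_of_neg hσc hσc
  have hσane : σa ≠ 0 := ne_of_lt hσa
  have hσbne : σb ≠ 0 := ne_of_lt hσb
  have hσcne : σc ≠ 0 := ne_of_lt hσc
  set c2 := μ + μ ^ 2 with hc2_def
  have hc2nn : (0:ℝ) ≤ c2 := by rw [hc2_def]; exact add_nonneg (le_of_lt hμpos) (sq_nonneg μ)
  set D1 := (1 + μ) + c2 / σa ^ 2 with hD1_def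
  set K1 := (1 + μ) * ((-σa) * V0) + c2 * (V0 / (-σa)) with hK1_def
  set D2 := D1 / σc ^ 2 with hD2_def
  set K2 := K1 / σc ^ 2 + R0 / (-σc) with hK2_def
  set D3 := (1 + c2) / σb ^ 2 + (1 + μ) with hD3_def
  set K3 := (1 + c2) * (E0 / (-σb)) + (1 + μ) * ((-σb) * E0) with hK3_def
  set CC := L ^ 2 * (D3 * K2 + K3) with hCC_def
  have hD1nn : (0:ℝ) ≤ D1 := by
    rw [hD1_def]
    have hmm := div_nonneg hc2nn (le_of_lt hσa2)
    linarith only [hmm, hμpos]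
  have hK1nn : (0:ℝ) ≤ K1 := by
    rw [hK1_def]
    have h1 : (0:ℝ) ≤ (1 + μ) * ((-σa) * V0) := by
      apply mul_nonneg (by linarith only [hμpos]) (mul_nonneg (le_of_lt hna) hV0nn)
    have h2 : (0:ℝ) ≤ c2 * (V0 / (-σa)) := mul_nonneg hc2nn (div_nonneg hV0nn (le_of_lt hna))
    exact add_nonneg h1 h2
  have hD2nn : (0:ℝ) ≤ D2 := div_nonneg hD1nn (le_of_lt hσc2)
  have hK2nn : (0:ℝ) ≤ K2 := by
    rw [hK2_def]
    exact add_nonneg (div_nonneg hK1nn (le_of_lt hσc2)) (div_nonneg hR0nn (le_of_lt hnc))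
  have hD3nn : (0:ℝ) ≤ D3 := by
    rw [hD3_def]
    have hmm : (0:ℝ) ≤ (1 + c2) / σb ^ 2 :=
      div_nonneg (by linarith only [hc2nn]) (le_of_lt hσb2)
    linarith only [hmm, hμpos]
  have hK3nn : (0:ℝ) ≤ K3 := by
    rw [hK3_def]
    have h1 : (0:ℝ) ≤ (1 + c2) * (E0 / (-σb)) :=
      mul_nonneg (by linarith only [hc2nn]) (div_nonneg hE0nn (le_of_lt hnb))
    have h2 : (0:ℝ) ≤ (1 + μ) * ((-σb) * E0) := by
      apply mul_nonneg (by linarith only [hμpos]) (mul_nonneg (le_of_lt hnb) hE0nn)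
    exact add_nonneg h1 h2
  have hCCnn : (0:ℝ) ≤ CC := by
    rw [hCC_def]
    exact mul_nonneg (by positivity) (add_nonneg (mul_nonneg hD3nn hK2nn) hK3nn)
  have hTeq : L ^ 2 * (D3 * D2) = Θf μ := by
    rw [hD3_def, hD2_def, hD1_def, hc2_def, hTf_def]
    simp only
    rw [hσa_def, hσb_def, hσc_def]
    field_simp
    ring
  have h1mT : (0:ℝ) < 1 - Θf μ := by linarith only [hTμ]
  set KG := CC / (1 - Θf μ) with hKG_def
  have hKGnn : (0:ℝ) ≤ KG := div_nonneg hCCnn (le_of_lt h1mT)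
  set KP := D1 * KG + K1 with hKP_def
  set KR := D2 * KG + K2 with hKR_def
  set KE := KR / σb ^ 2 + E0 / (-σb) with hKE_def
  set KE2 := (-σb) * E0 + KR with hKE2_def
  set KR2 := (-σc) * R0 + KP with hKR2_def
  have hKPnn : (0:ℝ) ≤ KP := by
    rw [hKP_def]; exact add_nonneg (mul_nonneg hD1nn hKGnn) hK1nn
  have hKRnn : (0:ℝ) ≤ KR := by
    rw [hKR_def]; exact add_nonneg (mul_nonneg hD2nn hKGnn) hK2nn
  have h1μ : (0:ℝ) ≤ 1 + μ := by linarith only [hμpos]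
  -- the main estimate, for every horizon T
  have hfin : ∀ T, 0 ≤ T → ‖ee T‖ ^ 2 ≤ E0 + (KE + KE2) ∧ ‖er T‖ ^ 2 ≤ R0 + (KR + KR2) := by
    intro T hT
    obtain ⟨hA1v, hA2v, hA3v⟩ := filter_bounds hσa hevd hegc hT
    obtain ⟨hA1r, hA2r, hA3r⟩ := filter_bounds hσc herd hepc hT
    obtain ⟨hA1e, hA2e, hA3e⟩ := filter_bounds hσb heed herc hT
    rw [hev0, ← hV0_def] at hA1v hA2v hA3v
    rw [her0, ← hR0_def] at hA1r hA2r hA3r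
    rw [hee0, ← hE0_def] at hA1e hA2e hA3e
    set Qv := ∫ t in (0:ℝ)..T, ‖ev t‖ ^ 2 with hQv_def
    set Qv' := ∫ t in (0:ℝ)..T, ‖σa • ev t + eg t‖ ^ 2 with hQv'_def
    set QG := ∫ t in (0:ℝ)..T, ‖eg t‖ ^ 2 with hQG_def
    set Qp := ∫ t in (0:ℝ)..T, ‖ep t‖ ^ 2 with hQp_def
    set Qr := ∫ t in (0:ℝ)..T, ‖er t‖ ^ 2 with hQr_def
    set Qr' := ∫ t in (0:ℝ)..T, ‖σc • er t + ep t‖ ^ 2 with hQr'_def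
    set Qe := ∫ t in (0:ℝ)..T, ‖ee t‖ ^ 2 with hQe_def
    set Qe' := ∫ t in (0:ℝ)..T, ‖σb • ee t + er t‖ ^ 2 with hQe'_def
    set Qx := ∫ t in (0:ℝ)..T, ‖ex2 t‖ ^ 2 with hQx_def
    have hIcc2 : Icc (0:ℝ) T ⊆ Ici 0 := fun x hx => hx.1
    have hu : uIcc (0:ℝ) T = Icc 0 T := uIcc_of_le hT
    have iInt : ∀ {φ : ℝ → ℝ}, ContinuousOn φ (Icc 0 T) → IntervalIntegrable φ volume 0 T := by
      intro φ hφ; apply ContinuousOn.intervalIntegrable; rwa [hu]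
    have cev := hevc.mono hIcc2
    have ceg := hegc.mono hIcc2
    have cep := hepc.mono hIcc2
    have cer := herc.mono hIcc2
    have cee := heec.mono hIcc2
    have cex := hex2c.mono hIcc2
    have Iv : IntervalIntegrable (fun t => ‖ev t‖ ^ 2) volume 0 T := iInt (cev.norm.pow 2)
    have Iv' : IntervalIntegrable (fun t => ‖σa • ev t + eg t‖ ^ 2) volume 0 T :=
      iInt (((cev.const_smul σa).add ceg).norm.pow 2)
    have IG : IntervalIntegrable (fun t => ‖eg t‖ ^ 2) volume 0 T := iInt (ceg.norm.pow 2)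
    have Ip : IntervalIntegrable (fun t => ‖ep t‖ ^ 2) volume 0 T := iInt (cep.norm.pow 2)
    have Ir : IntervalIntegrable (fun t => ‖er t‖ ^ 2) volume 0 T := iInt (cer.norm.pow 2)
    have Ie : IntervalIntegrable (fun t => ‖ee t‖ ^ 2) volume 0 T := iInt (cee.norm.pow 2)
    have Ie' : IntervalIntegrable (fun t => ‖σb • ee t + er t‖ ^ 2) volume 0 T :=
      iInt (((cee.const_smul σb).add cer).norm.pow 2)
    have Ix : IntervalIntegrable (fun t => ‖ex2 t‖ ^ 2) volume 0 T := iInt (cex.norm.pow 2)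
    -- nonnegativity of the Q's
    have hQvnn : 0 ≤ Qv := intervalIntegral.integral_nonneg hT (fun t _ => sq_nonneg _)
    have hQGnn : 0 ≤ QG := intervalIntegral.integral_nonneg hT (fun t _ => sq_nonneg _)
    have hQrnn : 0 ≤ Qr := intervalIntegral.integral_nonneg hT (fun t _ => sq_nonneg _)
    have hQenn : 0 ≤ Qe := intervalIntegral.integral_nonneg hT (fun t _ => sq_nonneg _)
    -- step Qp
    have hQp : Qp ≤ (1 + μ) * Qv' + c2 * Qv := by
      have hptw : ∀ t ∈ Icc (0:ℝ) T,
          ‖ep t‖ ^ 2 ≤ (1 + μ) * ‖σa • ev t + eg t‖ ^ 2 + c2 * ‖ev t‖ ^ 2 := by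
        intro t ht
        rw [hep_id t]
        have hns := norm_sub_sq_le' (σa • ev t + eg t) (μ • ev t) hμpos
        have hsm : ‖μ • ev t‖ ^ 2 = μ ^ 2 * ‖ev t‖ ^ 2 := by
          rw [norm_smul, Real.norm_eq_abs, mul_pow, sq_abs]
        have hcoef : (1 + 1 / μ) * (μ ^ 2 * ‖ev t‖ ^ 2) = c2 * ‖ev t‖ ^ 2 := by
          rw [hc2_def]; field_simp; ring
        rw [hsm, hcoef] at hns
        exact hns
      calc Qp ≤ ∫ t in (0:ℝ)..T, ((1 + μ) * ‖σa • ev t + eg t‖ ^ 2 + c2 * ‖ev t‖ ^ 2) :=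
            intervalIntegral.integral_mono_on hT Ip ((Iv'.const_mul _).add (Iv.const_mul _)) hptw
        _ = (1 + μ) * Qv' + c2 * Qv := by
            rw [intervalIntegral.integral_add (Iv'.const_mul _) (Iv.const_mul _),
              intervalIntegral.integral_const_mul, intervalIntegral.integral_const_mul]
    -- step Qx
    have hQx : Qx ≤ (1 + μ) * Qe' + c2 * Qe := by
      have hptw : ∀ t ∈ Icc (0:ℝ) T,
          ‖ex2 t‖ ^ 2 ≤ (1 + μ) * ‖σb • ee t + er t‖ ^ 2 + c2 * ‖ee t‖ ^ 2 := by
        intro t ht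
        rw [hex2_id t]
        have hns := norm_sub_sq_le' (σb • ee t + er t) (μ • ee t) hμpos
        have hsm : ‖μ • ee t‖ ^ 2 = μ ^ 2 * ‖ee t‖ ^ 2 := by
          rw [norm_smul, Real.norm_eq_abs, mul_pow, sq_abs]
        have hcoef : (1 + 1 / μ) * (μ ^ 2 * ‖ee t‖ ^ 2) = c2 * ‖ee t‖ ^ 2 := by
          rw [hc2_def]; field_simp; ring
        rw [hsm, hcoef] at hns
        exact hns
      calc Qx ≤ ∫ t in (0:ℝ)..T, ((1 + μ) * ‖σb • ee t + er t‖ ^ 2 + c2 * ‖ee t‖ ^ 2) :=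
            intervalIntegral.integral_mono_on hT Ix ((Ie'.const_mul _).add (Ie.const_mul _)) hptw
        _ = (1 + μ) * Qe' + c2 * Qe := by
            rw [intervalIntegral.integral_add (Ie'.const_mul _) (Ie.const_mul _),
              intervalIntegral.integral_const_mul, intervalIntegral.integral_const_mul]
    -- closing the loop
    have hQGle : QG ≤ L ^ 2 * (Qe + Qx) := by
      have hptw : ∀ t ∈ Icc (0:ℝ) T,
          ‖eg t‖ ^ 2 ≤ L ^ 2 * (‖ee t‖ ^ 2 + ‖ex2 t‖ ^ 2) := by
        intro t ht
        have hEb := hgbd t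
        have hk := Real.exp_pos (μ * t)
        have e1 : ‖eg t‖ ^ 2 = (Real.exp (μ * t)) ^ 2 * ‖g t‖ ^ 2 := by
          rw [heg_def]; simp only
          rw [norm_smul, Real.norm_eq_abs, abs_of_pos hk, mul_pow]
        have e2 : ‖ee t‖ ^ 2 = (Real.exp (μ * t)) ^ 2 * ‖e t‖ ^ 2 := by
          rw [hee_def]; simp only
          rw [norm_smul, Real.norm_eq_abs, abs_of_pos hk, mul_pow]
        have e3 : ‖ex2 t‖ ^ 2 = (Real.exp (μ * t)) ^ 2 * ‖x2 t‖ ^ 2 := by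
          rw [hex2_def]; simp only
          rw [norm_smul, Real.norm_eq_abs, abs_of_pos hk, mul_pow]
        rw [e1, e2, e3]
        have hk2 : (0:ℝ) < (Real.exp (μ * t)) ^ 2 := by positivity
        calc (Real.exp (μ * t)) ^ 2 * ‖g t‖ ^ 2
            ≤ (Real.exp (μ * t)) ^ 2 * (L ^ 2 * (‖e t‖ ^ 2 + ‖x2 t‖ ^ 2)) :=
              mul_le_mul_of_nonneg_left hEb (le_of_lt hk2)
          _ = L ^ 2 * ((Real.exp (μ * t)) ^ 2 * ‖e t‖ ^ 2
              + (Real.exp (μ * t)) ^ 2 * ‖x2 t‖ ^ 2) := by ring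
      calc QG ≤ ∫ t in (0:ℝ)..T, L ^ 2 * (‖ee t‖ ^ 2 + ‖ex2 t‖ ^ 2) :=
            intervalIntegral.integral_mono_on hT IG ((Ie.add Ix).const_mul _) hptw
        _ = L ^ 2 * (Qe + Qx) := by
            rw [intervalIntegral.integral_const_mul, intervalIntegral.integral_add Ie Ix]
    -- assemble the chain
    have s1 : Qp ≤ D1 * QG + K1 := by
      calc Qp ≤ (1 + μ) * Qv' + c2 * Qv := hQp
        _ ≤ (1 + μ) * ((-σa) * V0 + QG) + c2 * (QG / σa ^ 2 + V0 / (-σa)) :=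
            add_le_add (mul_le_mul_of_nonneg_left hA2v h1μ)
              (mul_le_mul_of_nonneg_left hA1v hc2nn)
        _ = D1 * QG + K1 := by rw [hD1_def, hK1_def]; field_simp; ring
    have s2 : Qr ≤ D2 * QG + K2 := by
      calc Qr ≤ Qp / σc ^ 2 + R0 / (-σc) := hA1r
        _ ≤ (D1 * QG + K1) / σc ^ 2 + R0 / (-σc) := by gcongr
        _ = D2 * QG + K2 := by rw [hD2_def, hK2_def]; field_simp; ring
    have s3 : Qe + Qx ≤ D3 * Qr + K3 := by
      have e3' : Qx ≤ (1 + μ) * ((-σb) * E0 + Qr) + c2 * (Qr / σb ^ 2 + E0 / (-σb)) := by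
        calc Qx ≤ (1 + μ) * Qe' + c2 * Qe := hQx
          _ ≤ (1 + μ) * ((-σb) * E0 + Qr) + c2 * (Qr / σb ^ 2 + E0 / (-σb)) :=
              add_le_add (mul_le_mul_of_nonneg_left hA2e h1μ)
                (mul_le_mul_of_nonneg_left hA1e hc2nn)
      have e1' : Qe ≤ Qr / σb ^ 2 + E0 / (-σb) := hA1e
      calc Qe + Qx ≤ (Qr / σb ^ 2 + E0 / (-σb))
            + ((1 + μ) * ((-σb) * E0 + Qr) + c2 * (Qr / σb ^ 2 + E0 / (-σb))) :=
            add_le_add e1' e3'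
        _ = D3 * Qr + K3 := by rw [hD3_def, hK3_def, hc2_def]; field_simp; ring
    have hloop : QG ≤ Θf μ * QG + CC := by
      calc QG ≤ L ^ 2 * (Qe + Qx) := hQGle
        _ ≤ L ^ 2 * (D3 * Qr + K3) := by
            apply mul_le_mul_of_nonneg_left s3 (by positivity)
        _ ≤ L ^ 2 * (D3 * (D2 * QG + K2) + K3) := by
            apply mul_le_mul_of_nonneg_left _ (by positivity)
            have hmm := mul_le_mul_of_nonneg_left s2 hD3nn
            linarith only [hmm]
        _ = L ^ 2 * (D3 * D2) * QG + CC := by rw [hCC_def]; ring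
        _ = Θf μ * QG + CC := by rw [hTeq]
    have hQGb : QG ≤ KG := by
      rw [hKG_def, le_div_iff₀ h1mT]
      calc QG * (1 - Θf μ) = QG - Θf μ * QG := by ring
        _ ≤ CC := by linarith only [hloop]
    have hQpb : Qp ≤ KP := by
      rw [hKP_def]
      calc Qp ≤ D1 * QG + K1 := s1
        _ ≤ D1 * KG + K1 := by
            have hmm := mul_le_mul_of_nonneg_left hQGb hD1nn
            linarith only [hmm]
    have hQrb : Qr ≤ KR := by
      rw [hKR_def]
      calc Qr ≤ D2 * QG + K2 := s2
        _ ≤ D2 * KG + K2 := by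
            have hmm := mul_le_mul_of_nonneg_left hQGb hD2nn
            linarith only [hmm]
    have hQeb : Qe ≤ KE := by
      rw [hKE_def]
      calc Qe ≤ Qr / σb ^ 2 + E0 / (-σb) := hA1e
        _ ≤ KR / σb ^ 2 + E0 / (-σb) := by gcongr
    have hQe'b : Qe' ≤ KE2 := by
      rw [hKE2_def]
      calc Qe' ≤ (-σb) * E0 + Qr := hA2e
        _ ≤ (-σb) * E0 + KR := by linarith only [hQrb]
    have hQr'b : Qr' ≤ KR2 := by
      rw [hKR2_def]
      calc Qr' ≤ (-σc) * R0 + Qp := hA2r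
        _ ≤ (-σc) * R0 + KP := by linarith only [hQpb]
    constructor
    · calc ‖ee T‖ ^ 2 ≤ E0 + Qe + Qe' := hA3e
        _ ≤ E0 + (KE + KE2) := by linarith only [hQeb, hQe'b]
    · calc ‖er T‖ ^ 2 ≤ R0 + Qr + Qr' := hA3r
        _ ≤ R0 + (KR + KR2) := by linarith only [hQrb, hQr'b]
  -- final assembly
  set CE := Real.sqrt (E0 + (KE + KE2)) with hCE_def
  set CR := Real.sqrt (R0 + (KR + KR2)) with hCR_def
  have hCEnn : 0 ≤ CE := Real.sqrt_nonneg _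
  have hCRnn : 0 ≤ CR := Real.sqrt_nonneg _
  have heeb : ∀ T, 0 ≤ T → ‖ee T‖ ≤ CE := by
    intro T hT
    have h0 := (hfin T hT).1
    calc ‖ee T‖ = Real.sqrt (‖ee T‖ ^ 2) := (Real.sqrt_sq (norm_nonneg _)).symm
      _ ≤ CE := Real.sqrt_le_sqrt h0
  have herb : ∀ T, 0 ≤ T → ‖er T‖ ≤ CR := by
    intro T hT
    have h0 := (hfin T hT).2
    calc ‖er T‖ = Real.sqrt (‖er T‖ ^ 2) := (Real.sqrt_sq (norm_nonneg _)).symm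
      _ ≤ CR := Real.sqrt_le_sqrt h0
  set C := (1 + (-lb)) * CE + CR + 1 with hC_def
  have hCpos : 0 < C := by
    rw [hC_def]
    have hmm : 0 ≤ (1 + (-lb)) * CE := mul_nonneg (by linarith only [hlb]) hCEnn
    linarith only [hmm, hCRnn]
  refine ⟨C, hCpos, μ, hμpos, ?_⟩
  intro t ht
  have hk := Real.exp_pos (μ * t)
  have hkey : ∀ u : EuclideanSpace ℝ (Fin n),
      ‖Real.exp (μ * t) • u‖ = Real.exp (μ * t) * ‖u‖ := by
    intro u
    rw [norm_smul, Real.norm_eq_abs, abs_of_pos hk]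
  have hee_val : ‖ee t‖ = Real.exp (μ * t) * ‖e t‖ := by
    rw [hee_def]; simp only; exact hkey (e t)
  have her_val : ‖er t‖ = Real.exp (μ * t) * ‖r t‖ := by
    rw [her_def]; simp only; exact hkey (r t)
  have hex2_val : ‖ex2 t‖ = Real.exp (μ * t) * ‖x2 t‖ := by
    rw [hex2_def]; simp only; exact hkey (x2 t)
  have hb1 : Real.exp (μ * t) * ‖e t‖ ≤ CE := by
    rw [← hee_val]; exact heeb t ht
  have hb3 : ‖ex2 t‖ ≤ (-lb) * ‖ee t‖ + ‖er t‖ := by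
    rw [hex2_id2 t]
    calc ‖lb • ee t + er t‖ ≤ ‖lb • ee t‖ + ‖er t‖ := norm_add_le _ _
      _ = (-lb) * ‖ee t‖ + ‖er t‖ := by
          rw [norm_smul, Real.norm_eq_abs, abs_of_neg hlb]
  have hb2 : Real.exp (μ * t) * ‖x2 t‖ ≤ (-lb) * CE + CR := by
    rw [← hex2_val]
    calc ‖ex2 t‖ ≤ (-lb) * ‖ee t‖ + ‖er t‖ := hb3
      _ ≤ (-lb) * CE + CR := by
          have hm1 := mul_le_mul_of_nonneg_left (heeb t ht) (by linarith only [hlb] : (0:ℝ) ≤ -lb)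
          have hm2 := herb t ht
          linarith only [hm1, hm2]
  have hxe : x1 t - ystar = e t := by rw [he_def]
  rw [hxe]
  have hform : -μ * t = -(μ * t) := by ring
  rw [hform, Real.exp_neg, ← div_eq_mul_inv, le_div_iff₀ hk]
  calc (‖e t‖ + ‖x2 t‖) * Real.exp (μ * t)
      = Real.exp (μ * t) * ‖e t‖ + Real.exp (μ * t) * ‖x2 t‖ := by ring
    _ ≤ CE + ((-lb) * CE + CR) := by linarith only [hb1, hb2]
    _ ≤ C := by rw [hC_def]; linarith only [hCEnn, hCRnn]
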